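/- arXiv:1709.05588 — 2 statements merged into one kernel-verified Lean document; each statement's English description precedes it below -/
import Mathlib

section
/- For any subset S of vertices of Q_n (n ≥ 2) with |S| = 2, the vertex boundary of S has at least 2n − 2 elements. -/
/-- The n-dimensional hypercube: vertices are `Fin n → Bool`,
adjacent iff Hamming distance exactly 1. -/
def Qn (n : ℕ) : SimpleGraph (Fin n → Bool) where
  Adj u v := hammingDist u v = 1
  symm := by constructor; intro u v h; rwa [hammingDist_comm]
  loopless := by constructor; intro u h; simp [hammingDist_self] at h

instance (n : ℕ) : DecidableRel (Qn n).Adj :=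
  fun u v => inferInstanceAs (Decidable (hammingDist u v = 1))

/-- Vertex boundary: vertices outside `S` adjacent to some vertex of `S`. -/
def vertexBoundary {V : Type*} (G : SimpleGraph V) (S : Set V) : Set V :=
  {v | v ∉ S ∧ ∃ u ∈ S, G.Adj u v}

lemma flip_adj {n : ℕ} (a : Fin n → Bool) (i : Fin n) :
    (Qn n).Adj a (Function.update a i (!a i)) := by
  show hammingDist _ _ = 1
  rw [hammingDist, Finset.card_eq_one]
  refine ⟨i, ?_⟩
  ext k
  by_cases h : k = i <;> simp [Function.update, h]

lemma flip_inj {n : ℕ} (a : Fin n → Bool) :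
    Function.Injective (fun i => Function.update a i (!a i)) := by
  intro i1 i2 h
  by_contra hne
  have := congrFun h i1
  simp [Function.update, hne] at this

theorem boundary_of_pair (n : ℕ) (hn : 2 ≤ n)
    (S : Set (Fin n → Bool)) (hS : S.ncard = 2) :
    2 * n - 2 ≤ (vertexBoundary (Qn n) S).ncard := by
  obtain ⟨a, b, hab, rfl⟩ := Set.ncard_eq_two.mp hS
  obtain ⟨j, hj⟩ : ∃ j, a j ≠ b j := by
    by_contra h; push_neg at h; exact hab (funext h)
  set f : Fin n → (Fin n → Bool) := fun i => Function.update a i (!a i) with hf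
  set g : Fin n → (Fin n → Bool) := fun i => Function.update b i (!b i) with hg
  let T : Finset (Fin n → Bool) :=
    ((Finset.univ.erase j).image f) ∪ ((Finset.univ.erase j).image g)
  have hfj : ∀ i : Fin n, i ≠ j → f i j = a j := fun i hi => by
    simp [hf, Function.update, Ne.symm hi]
  have hgj : ∀ i : Fin n, i ≠ j → g i j = b j := fun i hi => by
    simp [hg, Function.update, Ne.symm hi]
  have hfi : ∀ i : Fin n, f i i = !a i := fun i => by simp [hf]
  have hgi : ∀ i : Fin n, g i i = !b i := fun i => by simp [hg]
  have hsub : ↑T ⊆ vertexBoundary (Qn n) {a, b} := by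
    intro v hv
    simp only [T, Finset.coe_union, Set.mem_union, Finset.coe_image,
      Set.mem_image, Finset.mem_coe, Finset.mem_erase] at hv
    rcases hv with ⟨i, ⟨hij, -⟩, rfl⟩ | ⟨i, ⟨hij, -⟩, rfl⟩
    · refine ⟨?_, a, by simp, flip_adj a i⟩
      rintro (h | h)
      · have := congrFun h i; rw [hfi] at this; simp at this
      · have := congrFun h j; rw [hfj i hij] at this; exact hj this
    · refine ⟨?_, b, by simp, flip_adj b i⟩
      rintro (h | h)
      · have := congrFun h j; rw [hgj i hij] at this; exact hj this.symm
      · have := congrFun h i; rw [hgi] at this; simp at this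
  have hdisj : Disjoint ((Finset.univ.erase j).image f)
      ((Finset.univ.erase j).image g) := by
    rw [Finset.disjoint_left]
    rintro v hv1 hv2
    obtain ⟨i1, hi1, rfl⟩ := Finset.mem_image.mp hv1
    obtain ⟨i2, hi2, h⟩ := Finset.mem_image.mp hv2
    have := congrFun h j
    rw [hgj i2 (Finset.mem_erase.mp hi2).1, hfj i1 (Finset.mem_erase.mp hi1).1] at this
    exact hj this.symm
  have hcard : T.card = 2 * n - 2 := by
    rw [Finset.card_union_of_disjoint hdisj,
      Finset.card_image_of_injective _ (flip_inj a),
      Finset.card_image_of_injective _ (flip_inj b),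
      Finset.card_erase_of_mem (Finset.mem_univ j), Finset.card_univ,
      Fintype.card_fin]
    omega
  calc 2 * n - 2 = T.card := hcard.symm
    _ = (↑T : Set _).ncard := (Set.ncard_coe_finset T).symm
    _ ≤ _ := Set.ncard_le_ncard hsub (Set.toFinite _)
end

section
/- Let n ≥ 3 and 1 ≤ h ≤ n − 1. For all F_e ⊆ E(Q_n) with |F_e| ≤ h and all distinct F₁, F₂ ⊆ V(Q_n) with |F₁|, |F₂| ≤ n − h, there exists an edge of Q_n − F_e joining a vertex of V − (F₁ ∪ F₂) to a vertex of F₁ Δ F₂. In other words, Q_n is h-edge tolerable (n − h)-diagnosable under the PMC model. -/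
open Finset

variable {n : ℕ}

lemma Qn_neighbors (u : Fin n → Bool) :
    Finset.univ.filter (fun v => (Qn n).Adj u v)
      = Finset.univ.image (fun i => Function.update u i (!(u i))) := by
  ext v
  simp only [Finset.mem_filter, Finset.mem_univ, true_and, Finset.mem_image]
  constructor
  · intro hv
    have hv' : (Finset.univ.filter (fun i => u i ≠ v i)).card = 1 := hv
    obtain ⟨i, hi⟩ := Finset.card_eq_one.mp hv'
    refine ⟨i, ?_⟩
    have hiu : u i ≠ v i := by
      have : i ∈ ({i} : Finset (Fin n)) := Finset.mem_singleton_self i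
      rw [← hi] at this; simpa using this
    funext j
    by_cases hj : j = i
    · subst hj; rw [Function.update_self]
      cases hvj : v j <;> cases huj : u j <;> simp_all
    · rw [Function.update_of_ne hj]
      by_contra hne
      have hj2 : j ∈ ({i} : Finset (Fin n)) := by
        rw [← hi]; simp only [Finset.mem_filter, Finset.mem_univ, true_and]
        exact hne
      simp [hj] at hj2
  · rintro ⟨i, rfl⟩
    show (Finset.univ.filter _).card = 1
    have hset : (Finset.univ.filter (fun j => u j ≠ Function.update u i (!(u i)) j)) = {i} := by
      ext j
      by_cases hj : j = i
      · subst hj; simp [Function.update_self]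
      · simp [hj, Function.update_of_ne hj]
    rw [hset, Finset.card_singleton]

lemma Qn_degree (u : Fin n → Bool) :
    (Finset.univ.filter (fun v => (Qn n).Adj u v)).card = n := by
  rw [Qn_neighbors]
  rw [Finset.card_image_of_injective _ ?_, Finset.card_univ, Fintype.card_fin]
  intro i j hij
  by_contra hne
  have := congrFun hij i
  simp only [] at this
  rw [Function.update_self, Function.update_of_ne hne] at this
  cases h : u i <;> rw [h] at this <;> simp at this

def qpar {n : ℕ} (u : Fin n → Bool) : ZMod 2 := ∑ i, if u i then 1 else 0

lemma Qn_par_ne {u v : Fin n → Bool} (h : (Qn n).Adj u v) : qpar u ≠ qpar v := by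
  have key : qpar u + qpar v = 1 := by
    have h1 : ∀ i : Fin n, ((if u i then (1:ZMod 2) else 0) + (if v i then 1 else 0))
        = if u i ≠ v i then 1 else 0 := by
      intro i; cases u i <;> cases v i <;> simp <;> decide
    have : qpar u + qpar v = ∑ i, if u i ≠ v i then (1:ZMod 2) else 0 := by
      rw [qpar, qpar, ← Finset.sum_add_distrib]
      exact Finset.sum_congr rfl fun i _ => h1 i
    rw [this, Finset.sum_boole]
    have hd : (Finset.univ.filter (fun i => u i ≠ v i)).card = 1 := h
    rw [hd]; norm_num
  intro heq
  rw [heq, CharTwo.add_self_eq_zero] at key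
  exact zero_ne_one key

lemma card_adj_pairs (A B : Finset (Fin n → Bool)) :
    ((A ×ˢ B).filter fun p => (Qn n).Adj p.1 p.2).card
      = ∑ y ∈ A, (B.filter fun x => (Qn n).Adj y x).card := by
  rw [Finset.card_eq_sum_card_fiberwise (f := Prod.fst) (t := A)
    (fun p hp => (Finset.mem_product.mp (Finset.mem_filter.mp hp).1).1)]
  refine Finset.sum_congr rfl fun y hy => ?_
  have himg : ((A ×ˢ B).filter (fun p => (Qn n).Adj p.1 p.2)).filter (fun p => p.1 = y)
      = (B.filter fun x => (Qn n).Adj y x).image (fun x => (y, x)) := by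
    ext ⟨a, b⟩
    simp only [Finset.mem_filter, Finset.mem_product, Finset.mem_image]
    constructor
    · rintro ⟨⟨⟨ha, hb⟩, hadj⟩, rfl⟩
      exact ⟨b, ⟨hb, hadj⟩, rfl⟩
    · rintro ⟨x, ⟨hx, hadj⟩, heq⟩
      have h1 : y = a := congrArg Prod.fst heq
      have h2 : x = b := congrArg Prod.snd heq
      subst h1; subst h2
      exact ⟨⟨⟨hy, hx⟩, hadj⟩, rfl⟩
  rw [himg, Finset.card_image_of_injective]
  intro x x' hxx
  exact (Prod.mk.injEq y x y x' ▸ hxx).2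

lemma key_ineq (a b : ℕ) (hab : 1 ≤ a + b) : 2 ≤ ((a:ℤ) - b)^2 + ((a:ℤ) + b) := by
  rcases eq_or_ne a b with rfl | hne
  · have h1 : 1 ≤ a := by omega
    have h2 : ((a:ℤ) - a) = 0 := by ring
    have h3 : (1:ℤ) ≤ a := by exact_mod_cast h1
    nlinarith
  · have hz : (a:ℤ) - b ≠ 0 := by
      intro hq
      exact hne (by omega)
    have h1 : 1 ≤ ((a:ℤ) - b)^2 := by
      have := Int.one_le_abs hz
      nlinarith [sq_abs ((a:ℤ)-b)]
    have h2 : (1:ℤ) ≤ (a:ℤ) + b := by exact_mod_cast hab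
    linarith

lemma final_arith (n h a b c s0 s1 : ℕ) (hh1 : 1 ≤ h) (hn1 : a + c + h ≤ n)
    (hn2 : b + c + h ≤ n) (hs : s0 + s1 = a + b) (hab1 : 1 ≤ a + b)
    (hfin : (a + b) * n ≤ s0 * s1 + s1 * s0 + (a + b) * c + h) : False := by
  have key := key_ineq a b hab1
  have Z1 : ((a:ℤ)) + c + h ≤ n := by exact_mod_cast hn1
  have Z2 : ((b:ℤ)) + c + h ≤ n := by exact_mod_cast hn2
  have Zs : (s0:ℤ) + s1 = (a:ℤ) + b := by exact_mod_cast hs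
  have Zab : (1:ℤ) ≤ (a:ℤ) + b := by exact_mod_cast hab1
  have Zh : (1:ℤ) ≤ (h:ℤ) := by exact_mod_cast hh1
  have Zfin : ((a:ℤ) + b) * n ≤ (s0:ℤ) * s1 + (s1:ℤ) * s0 + ((a:ℤ) + b) * c + h := by
    exact_mod_cast hfin
  have hA : (0:ℤ) ≤ a := Int.ofNat_nonneg a
  have hB : (0:ℤ) ≤ b := Int.ofNat_nonneg b
  have h4s : 4 * (s0:ℤ) * s1 ≤ ((a:ℤ) + b)^2 := by
    nlinarith [sq_nonneg ((s0:ℤ) - s1)]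
  have hz1 : ((a:ℤ)) * ((a:ℤ) + c + h) ≤ (a:ℤ) * n := mul_le_mul_of_nonneg_left Z1 hA
  have hz2 : ((b:ℤ)) * ((b:ℤ) + c + h) ≤ (b:ℤ) * n := mul_le_mul_of_nonneg_left Z2 hB
  nlinarith [mul_nonneg (by linarith : (0:ℤ) ≤ (a:ℤ) + b - 1) (by linarith : (0:ℤ) ≤ (h:ℤ) - 1)]

theorem Qn_h_edge_tolerable_diagnosable (n h : ℕ) (hn : 3 ≤ n) (hh1 : 1 ≤ h)
    (hhn : h ≤ n - 1) :
    ∀ (Fe : Set (Sym2 (Fin n → Bool))), Fe ⊆ (Qn n).edgeSet → Fe.ncard ≤ h →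
    ∀ (F₁ F₂ : Set (Fin n → Bool)), F₁ ≠ F₂ →
      F₁.ncard ≤ n - h → F₂.ncard ≤ n - h →
      ∃ x, x ∉ F₁ ∪ F₂ ∧ ∃ y ∈ symmDiff F₁ F₂, ((Qn n).deleteEdges Fe).Adj x y := by
  classical
  intro Fe hFeE hFeCard F₁ F₂ hne hc1 hc2
  by_contra hcon
  push_neg at hcon
  set SΔ : Finset (Fin n → Bool) := (symmDiff F₁ F₂).toFinite.toFinset with hSΔdef
  set Cf : Finset (Fin n → Bool) := (F₁ ∩ F₂).toFinite.toFinset with hCfdef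
  set Af : Finset (Fin n → Bool) := (F₁ \ F₂).toFinite.toFinset with hAfdef
  set Bf : Finset (Fin n → Bool) := (F₂ \ F₁).toFinite.toFinset with hBfdef
  set FeF : Finset (Sym2 (Fin n → Bool)) := Fe.toFinite.toFinset with hFeFdef
  set Of : Finset (Fin n → Bool) := ((F₁ ∪ F₂).toFinite.toFinset)ᶜ with hOfdef
  have hmemS : ∀ x, x ∈ SΔ ↔ x ∈ F₁ ∧ x ∉ F₂ ∨ x ∈ F₂ ∧ x ∉ F₁ := by
    intro x
    rw [hSΔdef, Set.Finite.mem_toFinset, Set.mem_symmDiff]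
  have hmemC : ∀ x, x ∈ Cf ↔ x ∈ F₁ ∧ x ∈ F₂ := by
    intro x
    rw [hCfdef, Set.Finite.mem_toFinset, Set.mem_inter_iff]
  have hmemA : ∀ x, x ∈ Af ↔ x ∈ F₁ ∧ x ∉ F₂ := by
    intro x
    rw [hAfdef, Set.Finite.mem_toFinset, Set.mem_diff]
  have hmemB : ∀ x, x ∈ Bf ↔ x ∈ F₂ ∧ x ∉ F₁ := by
    intro x
    rw [hBfdef, Set.Finite.mem_toFinset, Set.mem_diff]
  have hmemO : ∀ x, x ∈ Of ↔ ¬(x ∈ F₁ ∨ x ∈ F₂) := by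
    intro x
    rw [hOfdef, Finset.mem_compl, Set.Finite.mem_toFinset, Set.mem_union]
  -- cardinalities
  have hcard1 : Af.card + Cf.card ≤ n - h := by
    have he : F₁.toFinite.toFinset = Af ∪ Cf := by
      ext x
      rw [Set.Finite.mem_toFinset, Finset.mem_union, hmemA, hmemC]
      tauto
    have hd : Disjoint Af Cf := by
      rw [Finset.disjoint_left]
      intro x hx hx'
      rw [hmemA] at hx
      rw [hmemC] at hx'
      exact hx.2 hx'.2
    have hnc := Set.ncard_eq_toFinset_card F₁ F₁.toFinite
    rw [he, Finset.card_union_of_disjoint hd] at hnc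
    omega
  have hcard2 : Bf.card + Cf.card ≤ n - h := by
    have he : F₂.toFinite.toFinset = Bf ∪ Cf := by
      ext x
      rw [Set.Finite.mem_toFinset, Finset.mem_union, hmemB, hmemC]
      tauto
    have hd : Disjoint Bf Cf := by
      rw [Finset.disjoint_left]
      intro x hx hx'
      rw [hmemB] at hx
      rw [hmemC] at hx'
      exact hx.2 hx'.1
    have hnc := Set.ncard_eq_toFinset_card F₂ F₂.toFinite
    rw [he, Finset.card_union_of_disjoint hd] at hnc
    omega
  have hdAB : Disjoint Af Bf := by
    rw [Finset.disjoint_left]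
    intro x hx hx'
    rw [hmemA] at hx
    rw [hmemB] at hx'
    exact hx.2 hx'.1
  have hScard : SΔ.card = Af.card + Bf.card := by
    rw [← Finset.card_union_of_disjoint hdAB]
    congr 1
    ext x
    rw [hmemS, Finset.mem_union, hmemA, hmemB]
  have hSne : 1 ≤ SΔ.card := by
    obtain ⟨x, hx⟩ := Set.symmDiff_nonempty.mpr hne
    rw [Set.mem_symmDiff] at hx
    exact Finset.card_pos.mpr ⟨x, (hmemS x).mpr hx⟩
  -- parity split
  have hz : ∀ z : ZMod 2, z = 0 ∨ z = 1 := by decide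
  set S0 : Finset (Fin n → Bool) := SΔ.filter (fun y => qpar y = 0) with hS0def
  set S1 : Finset (Fin n → Bool) := SΔ.filter (fun y => qpar y = 1) with hS1def
  have hS01 : S0.card + S1.card = SΔ.card := by
    rw [← Finset.card_union_of_disjoint]
    · congr 1
      ext y
      rw [hS0def, hS1def, Finset.mem_union, Finset.mem_filter, Finset.mem_filter]
      rcases hz (qpar y) with h0 | h0 <;> simp [h0]
    · rw [Finset.disjoint_left]
      intro y hy hy'
      rw [hS0def, Finset.mem_filter] at hy
      rw [hS1def, Finset.mem_filter] at hy'
      rw [hy.2] at hy'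
      exact zero_ne_one hy'.2
  -- partition of univ
  have hdSC : Disjoint SΔ Cf := by
    rw [Finset.disjoint_left]
    intro x hx hx'
    rw [hmemS] at hx
    rw [hmemC] at hx'
    tauto
  have hdSCO : Disjoint (SΔ ∪ Cf) Of := by
    rw [Finset.disjoint_left]
    intro x hx hx'
    rw [hmemO] at hx'
    rw [Finset.mem_union, hmemS, hmemC] at hx
    tauto
  have huniv : (Finset.univ : Finset (Fin n → Bool)) = SΔ ∪ Cf ∪ Of := by
    ext x
    simp only [Finset.mem_univ, true_iff, Finset.mem_union, hmemS, hmemC, hmemO]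
    tauto
  -- degree split
  have hdeg : ∀ y ∈ SΔ, n = (SΔ.filter fun x => (Qn n).Adj y x).card
      + (Cf.filter fun x => (Qn n).Adj y x).card
      + (Of.filter fun x => (Qn n).Adj y x).card := by
    intro y _
    have hsplit : Finset.univ.filter (fun x => (Qn n).Adj y x)
        = ((SΔ.filter fun x => (Qn n).Adj y x) ∪ (Cf.filter fun x => (Qn n).Adj y x))
          ∪ (Of.filter fun x => (Qn n).Adj y x) := by
      rw [← Finset.filter_union, ← Finset.filter_union, ← huniv]
    have hOuter : Disjoint ((SΔ.filter fun x => (Qn n).Adj y x) ∪ (Cf.filter fun x => (Qn n).Adj y x))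
        (Of.filter fun x => (Qn n).Adj y x) := by
      rw [← Finset.filter_union]
      exact Finset.disjoint_filter_filter hdSCO
    have hd := Qn_degree y
    rw [hsplit, Finset.card_union_of_disjoint hOuter,
      Finset.card_union_of_disjoint (Finset.disjoint_filter_filter hdSC)] at hd
    omega
  -- main count
  have hmain : SΔ.card * n
      = (∑ y ∈ SΔ, (SΔ.filter fun x => (Qn n).Adj y x).card)
        + (∑ y ∈ SΔ, (Cf.filter fun x => (Qn n).Adj y x).card)
        + (∑ y ∈ SΔ, (Of.filter fun x => (Qn n).Adj y x).card) := by
    rw [← Finset.sum_add_distrib, ← Finset.sum_add_distrib]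
    rw [← Finset.sum_congr rfl hdeg]
    rw [Finset.sum_const, smul_eq_mul]
  -- bound: C part
  have hbC : (∑ y ∈ SΔ, (Cf.filter fun x => (Qn n).Adj y x).card) ≤ SΔ.card * Cf.card := by
    rw [← card_adj_pairs]
    calc ((SΔ ×ˢ Cf).filter fun p => (Qn n).Adj p.1 p.2).card
        ≤ (SΔ ×ˢ Cf).card := Finset.card_le_card (Finset.filter_subset _ _)
      _ = SΔ.card * Cf.card := Finset.card_product _ _
  -- bound: O part
  have hbO : (∑ y ∈ SΔ, (Of.filter fun x => (Qn n).Adj y x).card) ≤ h := by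
    rw [← card_adj_pairs]
    have hmap : ∀ p ∈ (SΔ ×ˢ Of).filter (fun p : _ × _ => (Qn n).Adj p.1 p.2),
        s(p.1, p.2) ∈ FeF := by
      intro p hp
      rw [Finset.mem_filter, Finset.mem_product] at hp
      obtain ⟨⟨hp1, hp2⟩, hadj⟩ := hp
      have hnot : p.2 ∉ F₁ ∪ F₂ := by
        rw [Set.mem_union]
        exact (hmemO p.2).mp hp2
      have hyS : p.1 ∈ symmDiff F₁ F₂ := by
        rw [Set.mem_symmDiff]
        exact (hmemS p.1).mp hp1
      have hx := hcon p.2 hnot p.1 hyS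
      rw [SimpleGraph.deleteEdges_adj] at hx
      push_neg at hx
      have hin := hx ((Qn n).adj_symm hadj)
      rw [hFeFdef, Set.Finite.mem_toFinset]
      rwa [Sym2.eq_swap] at hin
    have hinj : Set.InjOn (fun p : (Fin n → Bool) × (Fin n → Bool) => s(p.1, p.2))
        ↑((SΔ ×ˢ Of).filter (fun p : _ × _ => (Qn n).Adj p.1 p.2)) := by
      intro p hp q hq hpq
      rw [Finset.mem_coe, Finset.mem_filter, Finset.mem_product] at hp hq
      simp only [Sym2.eq, Sym2.rel_iff', Prod.mk.injEq, Prod.swap_prod_mk] at hpq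
      rcases hpq with ⟨h1, h2⟩ | ⟨h1, h2⟩
      · exact Prod.ext h1 h2
      · exfalso
        have hq2S : q.2 ∈ SΔ := h1 ▸ hp.1.1
        have hq2O := (hmemO q.2).mp hq.1.2
        have := (hmemS q.2).mp hq2S
        tauto
    calc ((SΔ ×ˢ Of).filter fun p => (Qn n).Adj p.1 p.2).card
        ≤ FeF.card := Finset.card_le_card_of_injOn _ hmap hinj
      _ = Fe.ncard := by rw [hFeFdef, ← Set.ncard_eq_toFinset_card Fe Fe.toFinite]
      _ ≤ h := hFeCard
  -- bound: S part
  have hbS : (∑ y ∈ SΔ, (SΔ.filter fun x => (Qn n).Adj y x).card)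
      ≤ S0.card * S1.card + S1.card * S0.card := by
    rw [← card_adj_pairs]
    have hsub : (SΔ ×ˢ SΔ).filter (fun p : _ × _ => (Qn n).Adj p.1 p.2)
        ⊆ (S0 ×ˢ S1) ∪ (S1 ×ˢ S0) := by
      intro p hp
      rw [Finset.mem_filter, Finset.mem_product] at hp
      obtain ⟨⟨hp1, hp2⟩, hadj⟩ := hp
      have hne' := Qn_par_ne hadj
      rw [Finset.mem_union, Finset.mem_product, Finset.mem_product,
        hS0def, hS1def, Finset.mem_filter, Finset.mem_filter, Finset.mem_filter,
        Finset.mem_filter]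
      rcases hz (qpar p.1) with h0 | h0 <;> rcases hz (qpar p.2) with h1 | h1
      · rw [h0, h1] at hne'
        exact absurd rfl hne'
      · exact Or.inl ⟨⟨hp1, h0⟩, hp2, h1⟩
      · exact Or.inr ⟨⟨hp1, h0⟩, hp2, h1⟩
      · rw [h0, h1] at hne'
        exact absurd rfl hne'
    calc ((SΔ ×ˢ SΔ).filter fun p => (Qn n).Adj p.1 p.2).card
        ≤ ((S0 ×ˢ S1) ∪ (S1 ×ˢ S0)).card := Finset.card_le_card hsub
      _ ≤ (S0 ×ˢ S1).card + (S1 ×ˢ S0).card := Finset.card_union_le _ _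
      _ = S0.card * S1.card + S1.card * S0.card := by
          rw [Finset.card_product, Finset.card_product]
  -- conclude
  refine final_arith n h Af.card Bf.card Cf.card S0.card S1.card hh1 (by omega) (by omega)
    (by omega) (by omega) ?_
  calc (Af.card + Bf.card) * n = SΔ.card * n := by rw [hScard]
    _ = _ + _ + _ := hmain
    _ ≤ S0.card * S1.card + S1.card * S0.card + (Af.card + Bf.card) * Cf.card + h := by
        rw [← hScard]
        omega
end
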